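/- For a 2d-index tensor that is an outer product of d antisymmetric 2d×2d matrices G^1, ..., G^d, the hyper-Pfaffian hpf(G^1 ⊗ ... ⊗ G^d) = (1/(2d)!) Σ_{σ ∈ S_{2d}} sgn(σ) G^1_{σ(1)σ(2)} G^2_{σ(3)σ(4)} ⋯ G^d_{σ(2d-1)σ(2d)} is totally symmetric in the matrices: it is invariant under any permutation of (G^1, ..., G^d). -/

import Mathlib

open scoped BigOperators Matrix
set_option maxHeartbeats 1000000

/-- Hyper-Pfaffian of the outer product of `d` matrices of size `2d × 2d`:
`hpf(G¹ ⊗ ⋯ ⊗ G^d) = (1/(2d)!) Σ_{σ ∈ S_{2d}} sgn(σ) Π_p G^p_{σ(2p-1) σ(2p)}`. -/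
noncomputable def hpfOuter {R : Type*} [CommRing R] [Algebra ℚ R] (d : ℕ)
    (G : Fin d → Matrix (Fin (2 * d)) (Fin (2 * d)) R) : R :=
  algebraMap ℚ R (1 / Nat.factorial (2 * d)) *
    ∑ σ : Equiv.Perm (Fin (2 * d)), (Equiv.Perm.sign σ : ℤ) •
      ∏ p : Fin d,
        G p (σ ⟨2 * p, by have := p.isLt; omega⟩)
            (σ ⟨2 * p + 1, by have := p.isLt; omega⟩)

/-- The hyper-Pfaffian of an outer product of antisymmetric matrices is totally
symmetric in the matrices. -/
theorem stmt4 {R : Type*} [CommRing R] [Algebra ℚ R] (d : ℕ)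
    (G : Fin d → Matrix (Fin (2 * d)) (Fin (2 * d)) R)
    (hG : ∀ r, (G r)ᵀ = -(G r)) (τ : Equiv.Perm (Fin d)) :
    hpfOuter d (fun r => G (τ r)) = hpfOuter d G := by
  unfold hpfOuter
  congr 1
  set e : Fin d × Fin 2 ≃ Fin (2 * d) :=
    finProdFinEquiv.trans (finCongr (by ring)) with he
  set Sb : Equiv.Perm (Fin (2 * d)) :=
    e.permCongr (Equiv.prodCongrLeft (fun _ : Fin 2 => τ⁻¹)) with hSb
  have hsign : Equiv.Perm.sign Sb = 1 := by
    rw [hSb, Equiv.Perm.sign_permCongr, Equiv.Perm.sign_prodCongrLeft]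
    simp [← sq, Int.units_sq]
  have happ : ∀ (p : Fin d) (i : Fin 2) (h : 2 * (p : ℕ) + (i : ℕ) < 2 * d)
      (h' : 2 * ((τ⁻¹ p : Fin d) : ℕ) + (i : ℕ) < 2 * d),
      Sb ⟨2 * p + i, h⟩ = ⟨2 * ((τ⁻¹ p : Fin d) : ℕ) + i, h'⟩ := by
    intro p i h h'
    have he1 : e (p, i) = ⟨2 * p + i, h⟩ := by
      simp [he, finProdFinEquiv, finCongr, Fin.ext_iff]
      omega
    have he2 : e (τ⁻¹ p, i) = ⟨2 * ((τ⁻¹ p : Fin d) : ℕ) + i, h'⟩ := by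
      simp [he, finProdFinEquiv, finCongr, Fin.ext_iff]
      omega
    have hsymm : e.symm ⟨2 * p + i, h⟩ = (p, i) := by
      rw [← he1, Equiv.symm_apply_apply]
    rw [hSb, Equiv.permCongr_apply, hsymm]
    simpa [Equiv.prodCongrLeft] using he2
  refine Fintype.sum_equiv (Equiv.mulRight Sb) _ _ (fun σ => ?_)
  simp only [Equiv.coe_mulRight]
  rw [show Equiv.Perm.sign (σ * Sb) = Equiv.Perm.sign σ by
    rw [map_mul, hsign, mul_one]]
  congr 1
  refine Fintype.prod_equiv τ _ _ (fun p => ?_)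
  have h0 : 2 * (p : ℕ) + ((0 : Fin 2) : ℕ) < 2 * d := by have := p.isLt; omega
  have h1 : 2 * (p : ℕ) + ((1 : Fin 2) : ℕ) < 2 * d := by have := p.isLt; omega
  have h0' : 2 * ((τ⁻¹ (τ p) : Fin d) : ℕ) + ((0 : Fin 2) : ℕ) < 2 * d := by
    have := (τ⁻¹ (τ p)).isLt; omega
  have h1' : 2 * ((τ⁻¹ (τ p) : Fin d) : ℕ) + ((1 : Fin 2) : ℕ) < 2 * d := by
    have := (τ⁻¹ (τ p)).isLt; omega
  have hτ0 : 2 * ((τ p : Fin d) : ℕ) + ((0 : Fin 2) : ℕ) < 2 * d := by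
    have := (τ p).isLt; omega
  have hτ1 : 2 * ((τ p : Fin d) : ℕ) + ((1 : Fin 2) : ℕ) < 2 * d := by
    have := (τ p).isLt; omega
  have k0 := happ (τ p) 0 hτ0 h0'
  have k1 := happ (τ p) 1 hτ1 h1'
  simp only [Fin.val_zero, Fin.val_one, add_zero, Equiv.Perm.coe_inv, Equiv.symm_apply_apply] at k0 k1
  simp only [Equiv.Perm.mul_apply]
  rw [k0, k1]
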